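/- Let X be a topological space with no compact component, and for each component C of X fix a maximal collection D(C) of closed subsets of C with the finite intersection property and empty intersection. Let Y = X ∪ {p} with p ∉ X, and declare a subset U ⊆ Y open iff either (I) p ∉ U and U is open in X, or (II) p ∈ U, U ∩ X is open in X, and for every component C of X, U contains some element of D(C). Then this collection of sets forms a topology on Y. -/

import Mathlib

open Set

/-- A collection of sets has the finite intersection property if every finite
subcollection has nonempty intersection. -/
def FIP {α : Type*} (D : Set (Set α)) : Prop :=
  ∀ F ⊆ D, F.Finite → (⋂₀ F).Nonempty

/-- `D` is a maximal collection of closed subsets of `C` with the finite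
intersection property and empty intersection. -/
def IsMaxFIPFamily {X : Type*} [TopologicalSpace X] (C : Set X) (D : Set (Set X)) : Prop :=
  (∀ A ∈ D, IsClosed A ∧ A ⊆ C) ∧ FIP D ∧ ⋂₀ D = ∅ ∧
    ∀ D' : Set (Set X), (∀ A ∈ D', IsClosed A ∧ A ⊆ C) → FIP D' → ⋂₀ D' = ∅ →
      D ⊆ D' → D' = D

/-- The open sets of the one-point connectification `Y = X ∪ {p}`, modelled as
`Option X` with `p = none`: (I) sets not containing `none` whose trace on `X` is
open in `X`, and (II) sets containing `none` whose trace on `X` is open in `X`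
and which contain (the image of) a member of `𝒟 C` for every connected
component `C` of `X`. -/
def OPOpens {X : Type*} [TopologicalSpace X] (𝒟 : Set X → Set (Set X)) :
    Set (Set (Option X)) :=
  {U | (none ∉ U ∧ IsOpen (some ⁻¹' U)) ∨
       (none ∈ U ∧ IsOpen (some ⁻¹' U) ∧
         ∀ x : X, ∃ A ∈ 𝒟 (connectedComponent x), some '' A ⊆ U)}

/-- The collection `OPOpens 𝒟` forms a topology on `Y = X ∪ {p}`: it contains the
whole space and is closed under pairwise intersections and arbitrary unions. -/
lemma inter_mem_maxFIP {X : Type*} [TopologicalSpace X] {C : Set X} {D : Set (Set X)}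
    (h : IsMaxFIPFamily C D) {A B : Set X} (hA : A ∈ D) (hB : B ∈ D) : A ∩ B ∈ D := by
  obtain ⟨hcl, hfip, hempty, hmax⟩ := h
  have key : insert (A ∩ B) D = D := by
    apply hmax
    · rintro s hs
      rcases hs with rfl | hs
      · exact ⟨((hcl A hA).1).inter (hcl B hB).1, (inter_subset_left).trans (hcl A hA).2⟩
      · exact hcl s hs
    · intro F hF hFfin
      obtain ⟨y, hy⟩ := hfip ((F \ {A ∩ B}) ∪ {A, B})
        (by
          rintro s (⟨hs, hs'⟩ | hs)
          · rcases hF hs with rfl | h; · exact absurd rfl hs'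
            · exact h
          · rcases hs with rfl | rfl <;> assumption)
        (hFfin.diff.union ((Set.finite_singleton B).insert A))
      refine ⟨y, fun s hs => ?_⟩
      by_cases hsAB : s = A ∩ B
      · subst hsAB
        exact ⟨hy A (Or.inr (Or.inl rfl)), hy B (Or.inr (Or.inr rfl))⟩
      · exact hy s (Or.inl ⟨hs, hsAB⟩)
    · rw [sInter_insert, hempty, inter_empty]
    · exact subset_insert _ _
  rw [← key]; exact mem_insert _ _

theorem stmt_8 {X : Type*} [TopologicalSpace X] (𝒟 : Set X → Set (Set X))
    (hnc : ∀ x : X, ¬ IsCompact (connectedComponent x))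
    (h𝒟 : ∀ x : X, IsMaxFIPFamily (connectedComponent x) (𝒟 (connectedComponent x))) :
    Set.univ ∈ OPOpens 𝒟 ∧
    (∀ U ∈ OPOpens 𝒟, ∀ V ∈ OPOpens 𝒟, U ∩ V ∈ OPOpens 𝒟) ∧
    (∀ S ⊆ OPOpens 𝒟, ⋃₀ S ∈ OPOpens 𝒟) := by
  have hne : ∀ x : X, (𝒟 (connectedComponent x)).Nonempty := by
    intro x
    rcases Set.eq_empty_or_nonempty (𝒟 (connectedComponent x)) with h | h
    · exfalso
      have := (h𝒟 x).2.2.1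
      rw [h, sInter_empty] at this
      exact absurd (this ▸ mem_univ x) (notMem_empty x)
    · exact h
  refine ⟨?_, ?_, ?_⟩
  · refine Or.inr ⟨mem_univ _, by simp, fun x => ?_⟩
    obtain ⟨A, hA⟩ := hne x
    exact ⟨A, hA, subset_univ _⟩
  · rintro U hU V hV
    have hVo : IsOpen (some ⁻¹' V) := hV.elim And.right fun h => h.2.1
    have hio : IsOpen (some ⁻¹' (U ∩ V)) := by
      rw [preimage_inter]
      exact (hU.elim And.right fun h => h.2.1).inter hVo
    rcases hU with ⟨hUp, hUo⟩ | ⟨hUp, hUo, hUD⟩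
    · exact Or.inl ⟨fun h => hUp h.1, hio⟩
    · rcases hV with ⟨hVp, hVo'⟩ | ⟨hVp, hVo', hVD⟩
      · exact Or.inl ⟨fun h => hVp h.2, hio⟩
      · refine Or.inr ⟨⟨hUp, hVp⟩, hio, fun x => ?_⟩
        obtain ⟨A, hA, hAU⟩ := hUD x
        obtain ⟨B, hB, hBV⟩ := hVD x
        refine ⟨A ∩ B, inter_mem_maxFIP (h𝒟 x) hA hB, ?_⟩
        rw [image_inter (Option.some_injective X)]
        exact inter_subset_inter hAU hBV
  · intro S hS
    have hops : IsOpen (some ⁻¹' ⋃₀ S) := by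
      rw [preimage_sUnion]
      exact isOpen_biUnion fun U hU => (hS hU).elim And.right fun h => h.2.1
    by_cases hp : none ∈ ⋃₀ S
    · obtain ⟨U0, hU0S, hpU0⟩ := hp
      rcases hS hU0S with ⟨h, _⟩ | ⟨_, _, hD⟩
      · exact absurd hpU0 h
      · refine Or.inr ⟨⟨U0, hU0S, hpU0⟩, hops, fun x => ?_⟩
        obtain ⟨A, hA, hAU⟩ := hD x
        exact ⟨A, hA, hAU.trans (subset_sUnion_of_mem hU0S)⟩
    · exact Or.inl ⟨hp, hops⟩
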